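/- Let G be an m×m matrix of finite measures on (0,∞) with total mass matrix ||G|| = ∫₀^∞ G(dx) substochastic with spectral radius strictly less than 1. Then the matrix renewal series Σ_{n=0}^∞ G^{*n}(u) converges for each u ≥ 0, and the vector function φ(u) = Σ_{n=0}^∞ G^{*n}(u)(I - ||G||)e, with e the all-ones vector, takes values in [0,1]^m and is non-decreasing in u with limit e as u → ∞. -/

import Mathlib

open MeasureTheory Matrix Set Filter

/-- `n`-fold matrix convolution power of a matrix of measures on `(0,∞)`:
`G^{*0}(u) = I` and `G^{*(n+1)}(u) = ∫₀^u G^{*n}(u-y) G(dy)`. -/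
noncomputable def matConvPow {m : ℕ} (G : Fin m → Fin m → Measure ℝ) :
    ℕ → ℝ → Matrix (Fin m) (Fin m) ℝ
  | 0, _ => 1
  | (n + 1), u => Matrix.of fun i j =>
      ∑ k, ∫ y in Set.Icc (0 : ℝ) u, (matConvPow G n (u - y)) i k ∂(G k j)
section Aux
variable {m : ℕ} (G : Fin m → Fin m → Measure ℝ) [∀ i j, IsFiniteMeasure (G i j)]

omit [∀ (i j : Fin m), IsFiniteMeasure (G i j)] in
lemma mcp_nonneg : ∀ (n : ℕ) (u : ℝ) (i j : Fin m), 0 ≤ matConvPow G n u i j := by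
  intro n
  induction n with
  | zero =>
    intro u i j
    simp only [matConvPow, Matrix.one_apply]
    split <;> norm_num
  | succ n ih =>
    intro u i j
    simp only [matConvPow, Matrix.of_apply]
    exact Finset.sum_nonneg fun k _ => integral_nonneg fun y => ih _ i k

lemma integral_Icc_indicator_eq (g : ℝ → ℝ) (μ : Measure ℝ) (u : ℝ) :
    ∫ y in Icc (0:ℝ) u, g (u - y) ∂μ =
      ∫ y, Set.indicator {q : ℝ × ℝ | 0 ≤ q.2 ∧ q.2 ≤ q.1}
        (fun q => g (q.1 - q.2)) (u, y) ∂μ := by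
  rw [← integral_indicator measurableSet_Icc]
  have h : (Icc (0:ℝ) u).indicator (fun y => g (u - y)) =
      fun y => Set.indicator {q : ℝ × ℝ | 0 ≤ q.2 ∧ q.2 ≤ q.1}
        (fun q => g (q.1 - q.2)) (u, y) := by
    funext y
    simp [Set.indicator_apply, Set.mem_Icc, Set.mem_setOf_eq]
  rw [h]

lemma mcp_measurable : ∀ (n : ℕ) (i j : Fin m), Measurable fun u => matConvPow G n u i j := by
  intro n
  induction n with
  | zero => intro i j; simp only [matConvPow]; exact measurable_const
  | succ n ih =>
    intro i j
    simp only [matConvPow, Matrix.of_apply]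
    apply Finset.measurable_sum
    intro k _
    have hg := ih i k
    have hH : StronglyMeasurable fun p : ℝ × ℝ =>
        Set.indicator {q : ℝ × ℝ | 0 ≤ q.2 ∧ q.2 ≤ q.1}
          (fun q => matConvPow G n (q.1 - q.2) i k) p := by
      apply Measurable.stronglyMeasurable
      apply Measurable.indicator
      · exact hg.comp (measurable_fst.sub measurable_snd)
      · exact (measurableSet_le measurable_const measurable_snd).inter
          (measurableSet_le measurable_snd measurable_fst)
    have hm2 := (hH.integral_prod_right' (ν := G k j)).measurable
    have heq : (fun u => ∫ y in Icc (0:ℝ) u, matConvPow G n (u - y) i k ∂(G k j)) =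
        fun u => ∫ y, Set.indicator {q : ℝ × ℝ | 0 ≤ q.2 ∧ q.2 ≤ q.1}
          (fun q => matConvPow G n (q.1 - q.2) i k) (u, y) ∂(G k j) :=
      funext fun u => integral_Icc_indicator_eq (fun t => matConvPow G n t i k) (G k j) u
    rw [heq]
    exact hm2

end Aux

section Aux2
variable {m : ℕ} (G : Fin m → Fin m → Measure ℝ) [∀ i j, IsFiniteMeasure (G i j)]
variable (Gnorm : Matrix (Fin m) (Fin m) ℝ)

lemma pow_entry_nonneg (h : ∀ i j, 0 ≤ Gnorm i j) :
    ∀ (n : ℕ) (i j : Fin m), 0 ≤ (Gnorm ^ n) i j := by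
  intro n
  induction n with
  | zero =>
    intro i j; rw [pow_zero]
    simp only [Matrix.one_apply]; split <;> norm_num
  | succ n ih =>
    intro i j
    rw [pow_succ, Matrix.mul_apply]
    exact Finset.sum_nonneg fun k _ => mul_nonneg (ih i k) (h k j)

variable (hGnorm : ∀ i j, Gnorm i j = (G i j Set.univ).toReal)

include hGnorm in
lemma Gnorm_nonneg : ∀ i j, 0 ≤ Gnorm i j := fun i j => by
  rw [hGnorm]; exact ENNReal.toReal_nonneg

include hGnorm in
lemma mcp_le_pow : ∀ (n : ℕ) (u : ℝ) (i j : Fin m),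
    matConvPow G n u i j ≤ (Gnorm ^ n) i j := by
  intro n
  induction n with
  | zero => intro u i j; rw [pow_zero]; simp [matConvPow]
  | succ n ih =>
    intro u i j
    simp only [matConvPow, Matrix.of_apply]
    rw [pow_succ, Matrix.mul_apply]
    apply Finset.sum_le_sum
    intro k _
    have hC : 0 ≤ (Gnorm ^ n) i k := pow_entry_nonneg Gnorm (Gnorm_nonneg G Gnorm hGnorm) n i k
    have h1 : ‖∫ y in Icc (0:ℝ) u, matConvPow G n (u - y) i k ∂(G k j)‖ ≤
        (Gnorm ^ n) i k * ((G k j) (Icc (0:ℝ) u)).toReal := by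
      refine norm_setIntegral_le_of_norm_le_const_ae' (measure_lt_top _ _) ?_
      refine ae_of_all _ fun y _ => ?_
      rw [Real.norm_eq_abs, abs_of_nonneg (mcp_nonneg G n _ i k)]
      exact ih _ i k
    calc ∫ y in Icc (0:ℝ) u, matConvPow G n (u - y) i k ∂(G k j)
        ≤ ‖∫ y in Icc (0:ℝ) u, matConvPow G n (u - y) i k ∂(G k j)‖ := by rw [Real.norm_eq_abs]; exact le_abs_self _
      _ ≤ (Gnorm ^ n) i k * ((G k j) (Icc (0:ℝ) u)).toReal := h1
      _ ≤ (Gnorm ^ n) i k * Gnorm k j := by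
          rw [hGnorm]
          exact mul_le_mul_of_nonneg_left
            (ENNReal.toReal_mono (measure_ne_top _ _) (measure_mono (subset_univ _))) hC

include hGnorm in
lemma mcp_integrable (n : ℕ) (u : ℝ) (i k a b : Fin m) :
    Integrable (fun y => matConvPow G n (u - y) i k) (G a b) := by
  refine Integrable.mono' (integrable_const ((Gnorm ^ n) i k)) ?_ ?_
  · exact ((mcp_measurable G n i k).comp (measurable_const.sub measurable_id)).aestronglyMeasurable
  · refine ae_of_all _ fun y => ?_
    rw [Real.norm_eq_abs, abs_of_nonneg (mcp_nonneg G n _ i k)]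
    exact mcp_le_pow G Gnorm hGnorm n _ i k

include hGnorm in
lemma mcp_mono : ∀ (n : ℕ) (u v : ℝ), u ≤ v → ∀ (i j : Fin m),
    matConvPow G n u i j ≤ matConvPow G n v i j := by
  intro n
  induction n with
  | zero => intro u v _ i j; simp [matConvPow]
  | succ n ih =>
    intro u v huv i j
    simp only [matConvPow, Matrix.of_apply]
    apply Finset.sum_le_sum
    intro k _
    calc ∫ y in Icc (0:ℝ) u, matConvPow G n (u - y) i k ∂(G k j)
        ≤ ∫ y in Icc (0:ℝ) u, matConvPow G n (v - y) i k ∂(G k j) := by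
          refine setIntegral_mono_on
            ((mcp_integrable G Gnorm hGnorm n u i k k j).integrableOn)
            ((mcp_integrable G Gnorm hGnorm n v i k k j).integrableOn)
            measurableSet_Icc fun y _ => ?_
          exact ih (u - y) (v - y) (by linarith) i k
      _ ≤ ∫ y in Icc (0:ℝ) v, matConvPow G n (v - y) i k ∂(G k j) := by
          refine setIntegral_mono_set
            ((mcp_integrable G Gnorm hGnorm n v i k k j).integrableOn)
            (ae_of_all _ fun y => mcp_nonneg G n _ i k)
            (HasSubset.Subset.eventuallyLE (Icc_subset_Icc_right huv))

include hGnorm in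
lemma mcp_rowstep : ∀ (n : ℕ) (u : ℝ) (i j : Fin m),
    matConvPow G (n + 1) u i j ≤ ∑ k, matConvPow G n u i k * Gnorm k j := by
  intro n u i j
  simp only [matConvPow, Matrix.of_apply]
  apply Finset.sum_le_sum
  intro k _
  have hC : 0 ≤ matConvPow G n u i k := mcp_nonneg G n u i k
  have h1 : ‖∫ y in Icc (0:ℝ) u, matConvPow G n (u - y) i k ∂(G k j)‖ ≤
      matConvPow G n u i k * ((G k j) (Icc (0:ℝ) u)).toReal := by
    refine norm_setIntegral_le_of_norm_le_const_ae' (measure_lt_top _ _) ?_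
    refine ae_of_all _ fun y hy => ?_
    rw [Real.norm_eq_abs, abs_of_nonneg (mcp_nonneg G n _ i k)]
    exact mcp_mono G Gnorm hGnorm n (u - y) u (by linarith [hy.1]) i k
  calc ∫ y in Icc (0:ℝ) u, matConvPow G n (u - y) i k ∂(G k j)
      ≤ ‖∫ y in Icc (0:ℝ) u, matConvPow G n (u - y) i k ∂(G k j)‖ := by rw [Real.norm_eq_abs]; exact le_abs_self _
    _ ≤ matConvPow G n u i k * ((G k j) (Icc (0:ℝ) u)).toReal := h1
    _ ≤ matConvPow G n u i k * Gnorm k j := by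
        rw [hGnorm]
        exact mul_le_mul_of_nonneg_left
          (ENNReal.toReal_mono (measure_ne_top _ _) (measure_mono (subset_univ _))) hC

end Aux2

section Aux3
variable {m : ℕ} (G : Fin m → Fin m → Measure ℝ) [∀ i j, IsFiniteMeasure (G i j)]
variable (Gnorm : Matrix (Fin m) (Fin m) ℝ)
variable (hGnorm : ∀ i j, Gnorm i j = (G i j Set.univ).toReal)
variable (hsupp : ∀ i j, G i j (Set.Iic 0) = 0)

include hGnorm hsupp in
lemma mcp_tendsto : ∀ (n : ℕ) (i j : Fin m),
    Tendsto (fun u => matConvPow G n u i j) atTop (nhds ((Gnorm ^ n) i j)) := by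
  intro n
  induction n with
  | zero =>
    intro i j
    simp only [matConvPow, pow_zero]
    exact tendsto_const_nhds
  | succ n ih =>
    intro i j
    simp only [matConvPow, Matrix.of_apply]
    rw [pow_succ, Matrix.mul_apply]
    apply tendsto_finset_sum
    intro k _
    -- goal : Tendsto (fun u => ∫ y in Icc 0 u, matConvPow G n (u-y) i k ∂(G k j))
    --   atTop (nhds ((Gnorm^n) i k * Gnorm k j))
    have hae : ∀ᵐ y ∂(G k j), 0 < y := by
      have hset : {y : ℝ | ¬ 0 < y} = Iic 0 := by ext y; simp [not_lt]
      rw [ae_iff, hset]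
      exact hsupp k j
    set C : ℝ := (Gnorm ^ n) i k with hCdef
    have hC0 : 0 ≤ C := pow_entry_nonneg Gnorm (Gnorm_nonneg G Gnorm hGnorm) n i k
    set F : ℝ → ℝ → ℝ :=
      fun u => (Icc (0:ℝ) u).indicator (fun y => matConvPow G n (u - y) i k) with hF
    have key : Tendsto (fun u => ∫ y, F u y ∂(G k j)) atTop
        (nhds (∫ _y, C ∂(G k j))) := by
      apply tendsto_integral_filter_of_dominated_convergence (bound := fun _ => C)
      · refine Eventually.of_forall fun u => ?_
        exact (((mcp_measurable G n i k).comp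
          (measurable_const.sub measurable_id)).indicator measurableSet_Icc).aestronglyMeasurable
      · refine Eventually.of_forall fun u => ae_of_all _ fun y => ?_
        simp only [hF]
        by_cases hy : y ∈ Icc (0:ℝ) u
        · rw [Set.indicator_of_mem hy, Real.norm_eq_abs,
            abs_of_nonneg (mcp_nonneg G n _ i k)]
          exact mcp_le_pow G Gnorm hGnorm n _ i k
        · rw [Set.indicator_of_notMem hy]
          simpa using hC0
      · exact integrable_const _
      · refine hae.mono fun y hy => ?_
        have hbase : Tendsto (fun u => matConvPow G n (u - y) i k) atTop (nhds C) := by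
          have := (ih i k).comp (tendsto_atTop_add_const_right atTop (-y) tendsto_id)
          simpa [sub_eq_add_neg, Function.comp_def] using this
        refine hbase.congr' ?_
        filter_upwards [eventually_ge_atTop y] with u hu
        simp only [hF]
        rw [Set.indicator_of_mem (mem_Icc.2 ⟨hy.le, hu⟩)]
    have hconst : (∫ _y, C ∂(G k j)) = C * Gnorm k j := by
      rw [integral_const, smul_eq_mul, hGnorm, mul_comm]; rfl
    rw [hconst] at key
    refine key.congr fun u => ?_
    simp only [hF]
    rw [integral_indicator measurableSet_Icc]

end Aux3

section Spec
open scoped ENNReal NNReal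

attribute [local instance] Matrix.linftyOpNormedAddCommGroup Matrix.linftyOpNormedRing
  Matrix.linftyOpNormedAlgebra

variable {m : ℕ}

noncomputable local instance : CompleteSpace (Matrix (Fin m) (Fin m) ℂ) :=
  FiniteDimensional.complete ℂ (Matrix (Fin m) (Fin m) ℂ)

lemma entry_norm_le (B : Matrix (Fin m) (Fin m) ℂ) (i j : Fin m) : ‖B i j‖ ≤ ‖B‖ := by
  have h1 : ‖B i j‖₊ ≤ ‖B‖₊ := by
    rw [Matrix.linfty_opNNNorm_def]
    calc ‖B i j‖₊ ≤ ∑ j', ‖B i j'‖₊ :=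
          Finset.single_le_sum (f := fun j' => ‖B i j'‖₊)
            (fun _ _ => zero_le) (Finset.mem_univ j)
      _ ≤ Finset.univ.sup fun i' => ∑ j', ‖B i' j'‖₊ :=
          Finset.le_sup (f := fun i' => ∑ j', ‖B i' j'‖₊) (Finset.mem_univ i)
  exact_mod_cast h1

lemma pow_entry_summable (hm : 0 < m) (Gnorm : Matrix (Fin m) (Fin m) ℝ)
    (hGn : ∀ i j, 0 ≤ Gnorm i j)
    (hρ : ∀ z ∈ spectrum ℂ (Gnorm.map (Complex.ofReal)), ‖z‖ < 1)
    (i j : Fin m) : Summable fun n : ℕ => (Gnorm ^ n) i j := by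
  haveI : Nonempty (Fin m) := ⟨⟨0, hm⟩⟩
  set A : Matrix (Fin m) (Fin m) ℂ := Gnorm.map (Complex.ofReal) with hA
  have hsr : spectralRadius ℂ A < 1 := by
    have hne : (spectrum ℂ A).Nonempty := spectrum.nonempty A
    have h := spectrum.spectralRadius_lt_of_forall_lt_of_nonempty hne (r := 1)
      (fun k hk => by
        have := hρ k hk
        exact_mod_cast this)
    simpa using h
  obtain ⟨r, hr1, hr2⟩ := exists_between hsr
  have hrtop : r ≠ ⊤ := (hr2.trans_le le_top).ne
  set ρ : ℝ≥0 := r.toNNReal with hρdef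
  have hrρ : (ρ : ℝ≥0∞) = r := ENNReal.coe_toNNReal hrtop
  have hρ1 : ρ < 1 := by
    rw [← ENNReal.coe_lt_coe, hrρ]
    simpa using hr2
  have hev : ∀ᶠ n : ℕ in atTop, ((‖A ^ n‖₊ : ℝ≥0∞) ^ (1 / (n:ℝ)) < r ∧ 1 ≤ n) := by
    refine ((spectrum.pow_nnnorm_pow_one_div_tendsto_nhds_spectralRadius A).eventually
      (Iio_mem_nhds hr1)).and (eventually_ge_atTop 1)
  obtain ⟨N, hN⟩ := eventually_atTop.1 hev
  have key : ∀ n, N ≤ n → ‖A ^ n‖₊ ≤ ρ ^ n := by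
    intro n hn
    obtain ⟨h1, h2⟩ := hN n hn
    have hn0 : (0:ℝ) < n := by exact_mod_cast h2
    have h3 := ENNReal.rpow_lt_rpow h1 hn0
    rw [← ENNReal.rpow_mul, one_div, inv_mul_cancel₀ (ne_of_gt hn0),
      ENNReal.rpow_one] at h3
    have h4 : (‖A ^ n‖₊ : ℝ≥0∞) ≤ (ρ : ℝ≥0∞) ^ n := by
      rw [hrρ, ← ENNReal.rpow_natCast r n]
      exact h3.le
    rw [← ENNReal.coe_pow, ENNReal.coe_le_coe] at h4
    exact h4
  have hmap : ∀ n : ℕ, A ^ n = (Gnorm ^ n).map Complex.ofReal := by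
    intro n
    have h0 : ∀ B : Matrix (Fin m) (Fin m) ℝ,
        B.map Complex.ofReal = Complex.ofRealHom.mapMatrix B := fun B => rfl
    rw [hA, h0, h0]
    exact (map_pow Complex.ofRealHom.mapMatrix Gnorm n).symm
  have hentry : ∀ M : ℕ, N ≤ M → (Gnorm ^ M) i j ≤ ((ρ : ℝ)) ^ M := by
    intro M hM
    calc (Gnorm ^ M) i j ≤ |(Gnorm ^ M) i j| := le_abs_self _
      _ = ‖(((Gnorm ^ M) i j : ℝ) : ℂ)‖ := by
          rw [Complex.norm_real, Real.norm_eq_abs]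
      _ = ‖(A ^ M) i j‖ := by rw [hmap M]; rfl
      _ ≤ ‖A ^ M‖ := entry_norm_le _ _ _
      _ ≤ ((ρ : ℝ)) ^ M := by
          have h := key M hM
          have : ‖A ^ M‖₊ ≤ ρ ^ M := h
          exact_mod_cast this
  rw [← summable_nat_add_iff N]
  refine Summable.of_nonneg_of_le
    (fun n => pow_entry_nonneg Gnorm hGn (n + N) i j)
    (fun n => ?_)
    (((summable_geometric_of_lt_one ρ.coe_nonneg (by exact_mod_cast hρ1)).mul_left
      (((ρ:ℝ)) ^ N)))
  calc (Gnorm ^ (n + N)) i j ≤ ((ρ : ℝ)) ^ (n + N) := hentry _ (Nat.le_add_left N n)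
    _ = ((ρ:ℝ)) ^ N * ((ρ:ℝ)) ^ n := by rw [pow_add, mul_comm]

end Spec

section Tau
variable {m : ℕ}

lemma rowsum_one_sub (Gnorm : Matrix (Fin m) (Fin m) ℝ) (k : Fin m) :
    ∑ j, (1 - Gnorm) k j = 1 - ∑ j, Gnorm k j := by
  simp [Matrix.sub_apply, Finset.sum_sub_distrib, Matrix.one_apply]

lemma tau_hasSum (Gnorm : Matrix (Fin m) (Fin m) ℝ)
    (hsum : ∀ i j, Summable fun n : ℕ => (Gnorm ^ n) i j) (i : Fin m) :
    HasSum (fun n : ℕ => ∑ k, (Gnorm ^ n) i k * (1 - ∑ j, Gnorm k j)) 1 := by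
  have hS : Summable (fun n : ℕ => ∑ k, (Gnorm ^ n) i k * (1 - ∑ j, Gnorm k j)) :=
    summable_sum fun k _ => (hsum i k).mul_right _
  have hgeom : ∀ N : ℕ, ∑ n ∈ Finset.range N, ∑ k, (Gnorm ^ n) i k * (1 - ∑ j, Gnorm k j)
      = 1 - ∑ k, (Gnorm ^ N) i k := by
    intro N
    have hmat : (∑ n ∈ Finset.range N, Gnorm ^ n) * (1 - Gnorm) = 1 - Gnorm ^ N := by
      have h := geom_sum_mul Gnorm N
      calc (∑ n ∈ Finset.range N, Gnorm ^ n) * (1 - Gnorm)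
          = -((∑ n ∈ Finset.range N, Gnorm ^ n) * (Gnorm - 1)) := by rw [← mul_neg, neg_sub]
        _ = -(Gnorm ^ N - 1) := by rw [h]
        _ = 1 - Gnorm ^ N := neg_sub _ _
    calc ∑ n ∈ Finset.range N, ∑ k, (Gnorm ^ n) i k * (1 - ∑ j, Gnorm k j)
        = ∑ k, (∑ n ∈ Finset.range N, Gnorm ^ n) i k * (1 - ∑ j, Gnorm k j) := by
          rw [Finset.sum_comm]
          refine Finset.sum_congr rfl fun k _ => ?_
          rw [Matrix.sum_apply, ← Finset.sum_mul]
      _ = ∑ k, (∑ n ∈ Finset.range N, Gnorm ^ n) i k * (∑ j, (1 - Gnorm) k j) := by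
          refine Finset.sum_congr rfl fun k _ => ?_
          rw [rowsum_one_sub]
      _ = ∑ j, ((∑ n ∈ Finset.range N, Gnorm ^ n) * (1 - Gnorm)) i j := by
          simp only [Matrix.mul_apply, Finset.mul_sum]
          rw [Finset.sum_comm]
      _ = 1 - ∑ k, (Gnorm ^ N) i k := by
          rw [hmat]
          simp [Matrix.sub_apply, Finset.sum_sub_distrib, Matrix.one_apply]
  have hzero : Tendsto (fun N => ∑ k, (Gnorm ^ N) i k) atTop (nhds 0) := by
    have := tendsto_finset_sum (Finset.univ : Finset (Fin m))
      (fun k (_ : k ∈ Finset.univ) => (hsum i k).tendsto_atTop_zero)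
    simpa using this
  have hps : Tendsto (fun N => ∑ n ∈ Finset.range N,
      ∑ k, (Gnorm ^ n) i k * (1 - ∑ j, Gnorm k j)) atTop (nhds 1) := by
    have h1 : Tendsto (fun N => 1 - ∑ k, (Gnorm ^ N) i k) atTop (nhds 1) := by
      simpa using (tendsto_const_nhds (x := (1:ℝ)) (f := atTop (α := ℕ))).sub hzero
    exact h1.congr fun N => (hgeom N).symm
  have hts := hS.hasSum.tendsto_sum_nat
  have heq : (∑' n, ∑ k, (Gnorm ^ n) i k * (1 - ∑ j, Gnorm k j)) = 1 :=
    tendsto_nhds_unique hts hps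
  have h2 := hS.hasSum
  rw [heq] at h2
  exact h2

end Tau

/-- convergence of the matrix renewal series and the Pollaczeck–Khinchine-type
vector `φ(u) = Σₙ G^{*n}(u)(I - ‖G‖)e`, which takes values in `[0,1]^m`, is nondecreasing
and tends to `e` as `u → ∞`. -/
theorem stmt_8 {m : ℕ} (hm : 0 < m)
    (G : Fin m → Fin m → Measure ℝ) [∀ i j, IsFiniteMeasure (G i j)]
    (hsupp : ∀ i j, G i j (Set.Iic 0) = 0)
    (Gnorm : Matrix (Fin m) (Fin m) ℝ)
    (hGnorm : ∀ i j, Gnorm i j = (G i j Set.univ).toReal)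
    (hsub : ∀ i, ∑ j, Gnorm i j ≤ 1)
    (hρ : ∀ z ∈ spectrum ℂ (Gnorm.map (Complex.ofReal)), ‖z‖ < 1)
    (φ : ℝ → Fin m → ℝ)
    (hφ : ∀ u i, φ u i = ∑ j,
        ((Matrix.of fun a b => ∑' n : ℕ, matConvPow G n u a b) *
          (1 - Gnorm)) i j) :
    (∀ u, 0 ≤ u → ∀ i j, Summable fun n : ℕ => matConvPow G n u i j) ∧
    (∀ u, 0 ≤ u → ∀ i, φ u i ∈ Set.Icc (0 : ℝ) 1) ∧
    (∀ i, ∀ u v : ℝ, 0 ≤ u → u ≤ v → φ u i ≤ φ v i) ∧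
    (∀ i, Tendsto (fun u => φ u i) atTop (nhds 1)) := by
  have hGn0 : ∀ i j, 0 ≤ Gnorm i j := Gnorm_nonneg G Gnorm hGnorm
  have hpow_summ : ∀ i j, Summable fun n : ℕ => (Gnorm ^ n) i j :=
    fun i j => pow_entry_summable hm Gnorm hGn0 hρ i j
  have hmcp_summ : ∀ (u : ℝ) (i j : Fin m), Summable fun n : ℕ => matConvPow G n u i j :=
    fun u i j => Summable.of_nonneg_of_le (fun n => mcp_nonneg G n u i j)
      (fun n => mcp_le_pow G Gnorm hGnorm n u i j) (hpow_summ i j)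
  have hc0 : ∀ k, 0 ≤ 1 - ∑ j, Gnorm k j := fun k => sub_nonneg.2 (hsub k)
  have hφ' : ∀ u i, φ u i = ∑' n : ℕ, ∑ k, matConvPow G n u i k * (1 - ∑ j, Gnorm k j) := by
    intro u i
    rw [hφ u i]
    calc ∑ j, ((Matrix.of fun a b => ∑' n : ℕ, matConvPow G n u a b) * (1 - Gnorm)) i j
        = ∑ k, (∑' n : ℕ, matConvPow G n u i k) * ∑ j, (1 - Gnorm) k j := by
          simp only [Matrix.mul_apply, Matrix.of_apply, Finset.mul_sum]
          rw [Finset.sum_comm]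
      _ = ∑ k, ∑' n : ℕ, matConvPow G n u i k * (1 - ∑ j, Gnorm k j) := by
          refine Finset.sum_congr rfl fun k _ => ?_
          rw [rowsum_one_sub, tsum_mul_right]
      _ = ∑' n : ℕ, ∑ k, matConvPow G n u i k * (1 - ∑ j, Gnorm k j) :=
          (Summable.tsum_finsetSum fun k _ => (hmcp_summ u i k).mul_right _).symm
  have ht0 : ∀ u i (n : ℕ), 0 ≤ ∑ k, matConvPow G n u i k * (1 - ∑ j, Gnorm k j) :=
    fun u i n => Finset.sum_nonneg fun k _ => mul_nonneg (mcp_nonneg G n u i k) (hc0 k)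
  have htsumm : ∀ u i, Summable (fun n : ℕ =>
      ∑ k, matConvPow G n u i k * (1 - ∑ j, Gnorm k j)) :=
    fun u i => summable_sum fun k _ => (hmcp_summ u i k).mul_right _
  have hle1 : ∀ u i, φ u i ≤ 1 := by
    intro u i
    rw [hφ' u i]
    refine Summable.tsum_le_of_sum_range_le (htsumm u i) fun N => ?_
    have hterm : ∀ n : ℕ, ∑ k, matConvPow G n u i k * (1 - ∑ j, Gnorm k j) ≤
        (∑ k, matConvPow G n u i k) - ∑ k, matConvPow G (n+1) u i k := by
      intro n
      have hstep : ∑ j', matConvPow G (n+1) u i j' ≤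
          ∑ k, matConvPow G n u i k * ∑ j', Gnorm k j' := by
        calc ∑ j', matConvPow G (n+1) u i j'
            ≤ ∑ j', ∑ k, matConvPow G n u i k * Gnorm k j' :=
              Finset.sum_le_sum fun j' _ => mcp_rowstep G Gnorm hGnorm n u i j'
          _ = ∑ k, matConvPow G n u i k * ∑ j', Gnorm k j' := by
              rw [Finset.sum_comm]
              exact Finset.sum_congr rfl fun k _ => (Finset.mul_sum _ _ _).symm
      have hexp : ∑ k, matConvPow G n u i k * (1 - ∑ j, Gnorm k j) =
          (∑ k, matConvPow G n u i k) - ∑ k, matConvPow G n u i k * ∑ j, Gnorm k j := by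
        simp [mul_sub, Finset.sum_sub_distrib]
      rw [hexp]
      linarith
    calc ∑ n ∈ Finset.range N, ∑ k, matConvPow G n u i k * (1 - ∑ j, Gnorm k j)
        ≤ ∑ n ∈ Finset.range N,
            ((∑ k, matConvPow G n u i k) - ∑ k, matConvPow G (n+1) u i k) :=
          Finset.sum_le_sum fun n _ => hterm n
      _ = (∑ k, matConvPow G 0 u i k) - ∑ k, matConvPow G N u i k :=
          Finset.sum_range_sub' (fun n => ∑ k, matConvPow G n u i k) N
      _ ≤ 1 := by
          have h0 : ∑ k, matConvPow G 0 u i k = 1 := by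
            simp [matConvPow, Matrix.one_apply]
          have hN0 : 0 ≤ ∑ k, matConvPow G N u i k :=
            Finset.sum_nonneg fun k _ => mcp_nonneg G N u i k
          linarith
  have h0le : ∀ u i, 0 ≤ φ u i := fun u i => by
    rw [hφ' u i]; exact tsum_nonneg (ht0 u i)
  have hmono : ∀ i, ∀ u v : ℝ, u ≤ v → φ u i ≤ φ v i := by
    intro i u v huv
    rw [hφ' u i, hφ' v i]
    exact Summable.tsum_le_tsum
      (fun n => Finset.sum_le_sum fun k _ =>
        mul_le_mul_of_nonneg_right (mcp_mono G Gnorm hGnorm n u v huv i k) (hc0 k))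
      (htsumm u i) (htsumm v i)
  refine ⟨fun u _ i j => hmcp_summ u i j, fun u _ i => ⟨h0le u i, hle1 u i⟩,
    fun i u v _ h => hmono i u v h, ?_⟩
  intro i
  have hmono' : Monotone fun u => φ u i := fun u v h => hmono i u v h
  have hbdd : BddAbove (range fun u => φ u i) := by
    refine ⟨1, ?_⟩
    rintro x ⟨u, rfl⟩
    exact hle1 u i
  have htends := tendsto_atTop_ciSup hmono' hbdd
  suffices hsup : (⨆ u, φ u i) = 1 by rwa [hsup] at htends
  refine le_antisymm (ciSup_le fun u => hle1 u i) ?_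
  have htau := tau_hasSum Gnorm hpow_summ i
  have hNle : ∀ N : ℕ, ∑ n ∈ Finset.range N, ∑ k, (Gnorm ^ n) i k * (1 - ∑ j, Gnorm k j) ≤
      ⨆ u, φ u i := by
    intro N
    have hconv : Tendsto (fun u => ∑ n ∈ Finset.range N,
        ∑ k, matConvPow G n u i k * (1 - ∑ j, Gnorm k j)) atTop
        (nhds (∑ n ∈ Finset.range N, ∑ k, (Gnorm ^ n) i k * (1 - ∑ j, Gnorm k j))) := by
      refine tendsto_finset_sum _ fun n _ => tendsto_finset_sum _ fun k _ => ?_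
      exact (mcp_tendsto G Gnorm hGnorm hsupp n i k).mul_const _
    refine le_of_tendsto hconv (Eventually.of_forall fun u => ?_)
    calc ∑ n ∈ Finset.range N, ∑ k, matConvPow G n u i k * (1 - ∑ j, Gnorm k j)
        ≤ φ u i := by
          rw [hφ' u i]
          exact Summable.sum_le_tsum _ (fun n _ => ht0 u i n) (htsumm u i)
      _ ≤ ⨆ u, φ u i := le_ciSup hbdd u
  exact le_of_tendsto htau.tendsto_sum_nat (Eventually.of_forall hNle)
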